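/- Let A^S be a real symmetric 3×3 matrix and b ∈ ℝ³. Let n̂ : [0,T] → ℝ³ be differentiable with |n̂(t)| = 1 for all t, and let r : [0,T] → (0,1] be differentiable and satisfy r′(t) = n̂(t)·b + r(t)( n̂(t)·(A^S n̂(t)) − tr(A^S) ). Define the control u(t) = (1/2) ( n̂(t) × n̂′(t) − (1/r(t)) n̂(t) × b − n̂(t) × (A^S n̂(t)) ). Then the function n(t) := r(t) n̂(t) satisfies n′(t) = b + 2 u(t) × n(t) + (A^S − tr(A^S) I) n(t) for all t ∈ [0,T]. -/
import Mathlib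


open Matrix

/-- The cross product on ℝ³. -/
def cross (u v : Fin 3 → ℝ) : Fin 3 → ℝ :=
  ![u 1 * v 2 - u 2 * v 1, u 2 * v 0 - u 0 * v 2, u 0 * v 1 - u 1 * v 0]

/-- The Euclidean dot product on ℝ³. -/
def dot (u v : Fin 3 → ℝ) : ℝ := ∑ j, u j * v j

/-- Given a unit-vector control path n̂ and a radius path r solving the projected equation,
the choice of Hamiltonian control
u = (1/2)(n̂ × n̂′ − (1/r) n̂ × b − n̂ × (Aˢ n̂)) makes n = r n̂ solve the Bloch equation
n′ = b + 2 u × n + (Aˢ − tr(Aˢ) I) n on [0,T]. -/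
theorem control_realizes_radius_path
    (AS : Matrix (Fin 3) (Fin 3) ℝ) (hsymm : AS.IsSymm) (b : Fin 3 → ℝ)
    (T : ℝ) (hT : 0 ≤ T)
    (nh nh' : ℝ → Fin 3 → ℝ) (r r' : ℝ → ℝ)
    (hnh : ∀ t ∈ Set.Icc 0 T, ∀ j,
      HasDerivWithinAt (fun s => nh s j) (nh' t j) (Set.Icc 0 T) t)
    (hunit : ∀ t ∈ Set.Icc 0 T, dot (nh t) (nh t) = 1)
    (hr : ∀ t ∈ Set.Icc 0 T, HasDerivWithinAt r (r' t) (Set.Icc 0 T) t)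
    (hrange : ∀ t ∈ Set.Icc 0 T, r t ∈ Set.Ioc (0 : ℝ) 1)
    (hODE : ∀ t ∈ Set.Icc 0 T,
      r' t = dot (nh t) b + r t * (dot (nh t) (AS.mulVec (nh t)) - AS.trace))
    (u : ℝ → Fin 3 → ℝ)
    (hu : ∀ t, u t = fun j => (1/2) *
      (cross (nh t) (nh' t) j - (1 / r t) * cross (nh t) b j
        - cross (nh t) (AS.mulVec (nh t)) j)) :
    ∀ t ∈ Set.Icc 0 T, ∀ j,
      HasDerivWithinAt (fun s => r s * nh s j)
        (b j + 2 * cross (u t) (fun i => r t * nh t i) j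
          + (AS.mulVec (fun i => r t * nh t i) j - AS.trace * (r t * nh t j)))
        (Set.Icc 0 T) t := by
  intro t ht j
  rcases eq_or_lt_of_le hT with hT0 | hT0
  · -- degenerate case T = 0 : Icc 0 T = {0}
    subst hT0
    rw [Set.Icc_self] at ht ⊢
    obtain rfl : t = 0 := ht
    rw [hasDerivWithinAt_iff_isLittleO, nhdsWithin_singleton, Asymptotics.isLittleO_pure]
    simp
  -- main case
  have hUD : UniqueDiffOn ℝ (Set.Icc (0:ℝ) T) := uniqueDiffOn_Icc hT0
  have h1 : dot (nh t) (nh t) = 1 := hunit t ht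
  have hO : r' t = dot (nh t) b + r t * (dot (nh t) (AS.mulVec (nh t)) - AS.trace) :=
    hODE t ht
  have hr0 : r t ≠ 0 := (hrange t ht).1.ne'
  have hinv : (1 / r t) * r t = 1 := by field_simp
  -- orthogonality from unit norm
  have h2 : dot (nh t) (nh' t) = 0 := by
    have hderiv : HasDerivWithinAt (fun s => dot (nh s) (nh s))
        (nh' t 0 * nh t 0 + nh t 0 * nh' t 0 +
          (nh' t 1 * nh t 1 + nh t 1 * nh' t 1) +
          (nh' t 2 * nh t 2 + nh t 2 * nh' t 2)) (Set.Icc 0 T) t := by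
      have e : (fun s => dot (nh s) (nh s)) =
          fun s => nh s 0 * nh s 0 + nh s 1 * nh s 1 + nh s 2 * nh s 2 := by
        funext s; simp [dot, Fin.sum_univ_three]
      rw [e]
      exact (((hnh t ht 0).mul (hnh t ht 0)).add ((hnh t ht 1).mul (hnh t ht 1))).add
        ((hnh t ht 2).mul (hnh t ht 2))
    have hconst : HasDerivWithinAt (fun s => dot (nh s) (nh s)) 0 (Set.Icc 0 T) t := by
      exact (hasDerivWithinAt_const t _ (1:ℝ)).congr (fun s hs => hunit s hs) (hunit t ht)
    have := hderiv.derivWithin (hUD t ht) ▸ hconst.derivWithin (hUD t ht)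
    have heq : nh' t 0 * nh t 0 + nh t 0 * nh' t 0 +
          (nh' t 1 * nh t 1 + nh t 1 * nh' t 1) +
          (nh' t 2 * nh t 2 + nh t 2 * nh' t 2) = 0 := by
      rw [← hderiv.derivWithin (hUD t ht), hconst.derivWithin (hUD t ht)]
    simp only [dot, Fin.sum_univ_three]
    nlinarith [heq]
  have hd : HasDerivWithinAt (fun s => r s * nh s j)
      (r' t * nh t j + r t * nh' t j) (Set.Icc 0 T) t :=
    (hr t ht).mul (hnh t ht j)
  convert hd using 1
  rw [hu]
  simp only [dot, Fin.sum_univ_three, Matrix.mulVec, dotProduct,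
    Matrix.trace, Matrix.diag, cross] at h1 h2 hO ⊢
  fin_cases j <;>
    simp only [Fin.zero_eta, Fin.mk_one, Fin.reduceFinMk, Fin.isValue,
      Matrix.cons_val_zero, Matrix.cons_val_one, Matrix.head_cons,
      Matrix.cons_val_two, Matrix.tail_cons] <;>
  [ (linear_combination (r t * nh' t 0 - b 0
        - r t * (AS 0 0 * nh t 0 + AS 0 1 * nh t 1 + AS 0 2 * nh t 2)) * h1
      + (- r t * nh t 0) * h2
      + (-(((nh t 0)^2 + (nh t 1)^2 + (nh t 2)^2) * b 0
          - (nh t 0 * b 0 + nh t 1 * b 1 + nh t 2 * b 2) * nh t 0)) * hinv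
      + (- nh t 0) * hO);
    (linear_combination (r t * nh' t 1 - b 1
        - r t * (AS 1 0 * nh t 0 + AS 1 1 * nh t 1 + AS 1 2 * nh t 2)) * h1
      + (- r t * nh t 1) * h2
      + (-(((nh t 0)^2 + (nh t 1)^2 + (nh t 2)^2) * b 1
          - (nh t 0 * b 0 + nh t 1 * b 1 + nh t 2 * b 2) * nh t 1)) * hinv
      + (- nh t 1) * hO);
    (linear_combination (r t * nh' t 2 - b 2
        - r t * (AS 2 0 * nh t 0 + AS 2 1 * nh t 1 + AS 2 2 * nh t 2)) * h1
      + (- r t * nh t 2) * h2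
      + (-(((nh t 0)^2 + (nh t 1)^2 + (nh t 2)^2) * b 2
          - (nh t 0 * b 0 + nh t 1 * b 1 + nh t 2 * b 2) * nh t 2)) * hinv
      + (- nh t 2) * hO)]
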